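/- Let Γ be a closed curve (boundary of a 2D Lipschitz domain), H^{-1/2}₀(Γ) = {ξ ∈ H^{-1/2}(Γ) : ⟨ξ,1⟩_Γ = 0}. Suppose D⁻¹ : H^{-1/2}₀(Γ) → H^{1/2}(Γ) is a bounded right inverse of arc-length differentiation, L : H^{1/2}(Γ) → H¹(Ω) a bounded right inverse of the trace operator, and S_h : H¹(Ω) → V_h a uniformly H¹-bounded projection preserving traces in Ψ_h = γV_h. If ξ ∈ H^{-1/2}₀(Γ) satisfies D⁻¹ξ ∈ Ψ_h, then v_h := ∇^⊥ S_h L D⁻¹ ξ satisfies v_h·ν = ξ, div v_h = 0, and ‖v_h‖_{H(div,Ω)} ≤ C ‖ξ‖_{H^{-1/2}(Γ)} with C independent of h and ξ. -/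

import Mathlib

/-- Lifting by arc-length integration (abstract form). `N = H^{-1/2}(Γ)`,
`Hh = H^{1/2}(Γ)`, `H1 = H¹(Ω)`, `Hd = H(div,Ω)`, `L2 = L²(Ω)`. Given a bounded
right inverse `Dinv` of the arc-length differentiation `dΓ` on the zero-mean
distributions (`m ξ = ⟨ξ,1⟩_Γ`), a bounded right inverse `L` of the trace `γ`,
a uniformly bounded operator `Sh` preserving traces in `Ψ_h = γ(V_h)`, and the
rotated gradient `curl = ∇^⊥ : H¹ → H(div)` (norm-nonincreasing, divergence
free, with normal trace `ntr (curl u) = (γ u)'`), if `ξ` has zero mean and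
`D⁻¹ξ ∈ Ψ_h`, then `v_h = ∇^⊥ S_h L D⁻¹ ξ` satisfies `v_h·ν = ξ`, `div v_h = 0`
and `‖v_h‖ ≤ C‖ξ‖` with `C = C_S ‖L‖ ‖D⁻¹‖` independent of `h` and `ξ`. -/
theorem stmt13 {N Hh H1 Hd L2 : Type*}
    [NormedAddCommGroup N] [NormedSpace ℝ N]
    [NormedAddCommGroup Hh] [NormedSpace ℝ Hh]
    [NormedAddCommGroup H1] [NormedSpace ℝ H1]
    [NormedAddCommGroup Hd] [NormedSpace ℝ Hd]
    [NormedAddCommGroup L2] [NormedSpace ℝ L2]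
    (dΓ : Hh →L[ℝ] N) (m : N →L[ℝ] ℝ)
    (Dinv : N →L[ℝ] Hh) (hDinv : ∀ ξ : N, m ξ = 0 → dΓ (Dinv ξ) = ξ)
    (γ : H1 →L[ℝ] Hh) (L : Hh →L[ℝ] H1) (hL : ∀ ψ : Hh, γ (L ψ) = ψ)
    (Vh : Submodule ℝ H1) (Sh : H1 →L[ℝ] H1)
    (CS : ℝ) (hCS0 : 0 ≤ CS) (hSh : ∀ w : H1, ‖Sh w‖ ≤ CS * ‖w‖)
    (hShtrace : ∀ w : H1, γ w ∈ Vh.map (γ : H1 →ₗ[ℝ] Hh) → γ (Sh w) = γ w)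
    (curl : H1 →L[ℝ] Hd) (dv : Hd →L[ℝ] L2) (ntr : Hd →ₗ[ℝ] N)
    (hntr : ∀ w : H1, ntr (curl w) = dΓ (γ w))
    (hdivcurl : ∀ w : H1, dv (curl w) = 0)
    (hcurlnorm : ∀ w : H1, ‖curl w‖ ≤ ‖w‖)
    (ξ : N) (hξ0 : m ξ = 0) (hξΨ : Dinv ξ ∈ Vh.map (γ : H1 →ₗ[ℝ] Hh)) :
    ntr (curl (Sh (L (Dinv ξ)))) = ξ ∧
    dv (curl (Sh (L (Dinv ξ)))) = 0 ∧
    ‖curl (Sh (L (Dinv ξ)))‖ ≤ CS * ‖L‖ * ‖Dinv‖ * ‖ξ‖ := by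
  have htr : γ (Sh (L (Dinv ξ))) = Dinv ξ := by
    rw [hShtrace _ (by rw [hL]; exact hξΨ), hL]
  refine ⟨?_, hdivcurl _, ?_⟩
  · rw [hntr, htr, hDinv ξ hξ0]
  · calc ‖curl (Sh (L (Dinv ξ)))‖ ≤ ‖Sh (L (Dinv ξ))‖ := hcurlnorm _
      _ ≤ CS * ‖L (Dinv ξ)‖ := hSh _
      _ ≤ CS * (‖L‖ * ‖Dinv ξ‖) := by
          exact mul_le_mul_of_nonneg_left (L.le_opNorm _) hCS0
      _ ≤ CS * (‖L‖ * (‖Dinv‖ * ‖ξ‖)) := by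
          have := Dinv.le_opNorm ξ
          gcongr
      _ = CS * ‖L‖ * ‖Dinv‖ * ‖ξ‖ := by ring
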